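/- Let d ≥ 1, let Ω ⊆ ℝ^d be open, let x ∈ Ω, and let f, P : Ω → ℝ be twice continuously differentiable. Then, as h → 0⁺, ∫_{B_h(x)} (y − x)·(f(y) − f(x))·P(y) dy = (|S^{d-1}|/(d(d+2)))·h^{d+2}·P(x)·∇f(x) + O(h^{d+3}) (as vectors in ℝ^d). -/

import Mathlib

open Asymptotics Filter Topology MeasureTheory Metric Set RealInnerProductSpace

/-- The surface measure `|S^{d-1}|` of the unit sphere in `ℝ^d`. -/
noncomputable def sphereArea (d : ℕ) : ℝ :=
  (((volume : Measure (EuclideanSpace ℝ (Fin d))).toSphere) Set.univ).toReal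

section aux
variable {d : ℕ}

lemma preimage_cb (T : EuclideanSpace ℝ (Fin d) ≃ₗᵢ[ℝ] EuclideanSpace ℝ (Fin d)) (r : ℝ) :
    T ⁻¹' closedBall 0 r = closedBall 0 r := by
  ext w
  simp [mem_closedBall_zero_iff, T.norm_map]

lemma setIntegral_isometry (T : EuclideanSpace ℝ (Fin d) ≃ₗᵢ[ℝ] EuclideanSpace ℝ (Fin d))
    (g : EuclideanSpace ℝ (Fin d) → ℝ) (r : ℝ) :
    ∫ w in closedBall 0 r, g (T w) = ∫ w in closedBall 0 r, g w := by
  have := T.measurePreserving.setIntegral_preimage_emb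
    (T.toHomeomorph.measurableEmbedding) g (closedBall 0 r)
  rwa [preimage_cb] at this

lemma moment_offdiag {i j : Fin d} (hij : i ≠ j) :
    ∫ w in closedBall (0 : EuclideanSpace ℝ (Fin d)) 1, w i * w j = 0 := by
  classical
  set T : EuclideanSpace ℝ (Fin d) ≃ₗᵢ[ℝ] EuclideanSpace ℝ (Fin d) :=
    LinearIsometryEquiv.piLpCongrRight 2
      (fun k => if k = i then LinearIsometryEquiv.neg ℝ else LinearIsometryEquiv.refl ℝ ℝ) with hT
  have h1 := setIntegral_isometry T (fun y => y i * y j) 1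
  have h2 : ∀ w : EuclideanSpace ℝ (Fin d), (T w) i * (T w) j = -(w i * w j) := by
    intro w
    have hi : (T w) i = -(w i) := by simp [hT]
    have hj : (T w) j = w j := by simp [hT, if_neg (Ne.symm hij)]
    rw [hi, hj]; ring
  simp only [h2, integral_neg] at h1
  linarith

lemma moment_diag (i j : Fin d) :
    ∫ w in closedBall (0 : EuclideanSpace ℝ (Fin d)) 1, (w i) ^ 2
      = ∫ w in closedBall (0 : EuclideanSpace ℝ (Fin d)) 1, (w j) ^ 2 := by
  classical
  set T : EuclideanSpace ℝ (Fin d) ≃ₗᵢ[ℝ] EuclideanSpace ℝ (Fin d) :=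
    LinearIsometryEquiv.piLpCongrLeft 2 ℝ ℝ (Equiv.swap i j) with hT
  have h1 := setIntegral_isometry T (fun y => (y i) ^ 2) 1
  have h2 : ∀ w : EuclideanSpace ℝ (Fin d), (T w) i = w j := by
    intro w
    simp only [hT, LinearIsometryEquiv.piLpCongrLeft_apply, Equiv.piCongrLeft'_apply,
      Equiv.symm_swap]
    rw [Equiv.swap_apply_left]
  simp only [h2] at h1
  exact h1.symm

end aux

section aux2
variable {d : ℕ}

lemma sphereArea_eq (hd : 1 ≤ d) :
    sphereArea d = d * (volume (ball (0 : EuclideanSpace ℝ (Fin d)) 1)).toReal := by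
  haveI : Nonempty (Fin d) := ⟨⟨0, hd⟩⟩
  rw [sphereArea, Measure.toSphere_apply_univ, ENNReal.toReal_mul]
  congr 1
  · simp [finrank_euclideanSpace_fin]

lemma integral_normsq (hd : 1 ≤ d) :
    ∫ w in closedBall (0 : EuclideanSpace ℝ (Fin d)) 1, ‖w‖ ^ 2
      = sphereArea d / (d + 2) := by
  haveI : Nonempty (Fin d) := ⟨⟨0, hd⟩⟩
  have key := integral_fun_norm_addHaar (volume : Measure (EuclideanSpace ℝ (Fin d)))
    (fun r : ℝ => Set.indicator (Set.Icc (0:ℝ) 1) (fun t => t ^ 2) r)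
  have hL : (∫ x : EuclideanSpace ℝ (Fin d),
        Set.indicator (Set.Icc (0:ℝ) 1) (fun t => t ^ 2) ‖x‖)
      = ∫ w in closedBall (0 : EuclideanSpace ℝ (Fin d)) 1, ‖w‖ ^ 2 := by
    rw [← integral_indicator (measurableSet_closedBall)]
    congr 1
    funext w
    by_cases hw : ‖w‖ ≤ 1
    · simp [Set.indicator, hw, norm_nonneg, mem_closedBall_zero_iff]
    · simp [Set.indicator, hw, mem_closedBall_zero_iff]
  have hdim : Module.finrank ℝ (EuclideanSpace ℝ (Fin d)) = d := finrank_euclideanSpace_fin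
  have hR : (∫ y in Set.Ioi (0:ℝ),
        y ^ (Module.finrank ℝ (EuclideanSpace ℝ (Fin d)) - 1) •
          Set.indicator (Set.Icc (0:ℝ) 1) (fun t => t ^ 2) y) = 1 / (d + 2 : ℝ) := by
    rw [hdim]
    have : ∀ y ∈ Set.Ioi (0:ℝ),
        y ^ (d - 1) • Set.indicator (Set.Icc (0:ℝ) 1) (fun t => t ^ 2) y
          = Set.indicator (Set.Ioc (0:ℝ) 1) (fun t => t ^ (d + 1)) y := by
      intro y hy
      have hy' : 0 < y := hy
      by_cases h1 : y ≤ 1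
      · have : y ^ (d - 1) * y ^ 2 = y ^ (d + 1) := by
          rw [← pow_add]
          congr 1
          omega
        simp [Set.indicator, hy'.le, h1, hy', smul_eq_mul, this]
      · simp [Set.indicator, h1]
    rw [setIntegral_congr_fun measurableSet_Ioi this, setIntegral_indicator measurableSet_Ioc,
      Set.inter_eq_self_of_subset_right Set.Ioc_subset_Ioi_self,
      ← intervalIntegral.integral_of_le (zero_le_one)]
    rw [integral_pow]
    push_cast
    ring_nf
  rw [hL, hR] at key
  rw [key, sphereArea_eq hd, hdim]
  have h2 : (0:ℝ) < d + 2 := by positivity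
  simp only [nsmul_eq_mul, smul_eq_mul, measureReal_def]
  field_simp

end aux2

section aux3
variable {d : ℕ}

lemma integrableOn_cb {g : EuclideanSpace ℝ (Fin d) → ℝ} (hg : Continuous g)
    (x : EuclideanSpace ℝ (Fin d)) (r : ℝ) : IntegrableOn g (closedBall x r) volume :=
  hg.continuousOn.integrableOn_compact (isCompact_closedBall _ _)

lemma cont_apply (i : Fin d) : Continuous fun w : EuclideanSpace ℝ (Fin d) => w i :=
  (EuclideanSpace.proj i).continuous

lemma moment_diag_val (hd : 1 ≤ d) (i : Fin d) :
    ∫ w in closedBall (0 : EuclideanSpace ℝ (Fin d)) 1, (w i) ^ 2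
      = sphereArea d / (d * (d + 2)) := by
  have hsum : ∑ j : Fin d, ∫ w in closedBall (0 : EuclideanSpace ℝ (Fin d)) 1, (w j) ^ 2
      = sphereArea d / (d + 2) := by
    rw [← integral_finset_sum _ (fun j _ =>
      integrableOn_cb (g := fun w : EuclideanSpace ℝ (Fin d) => (w j) ^ 2)
        ((cont_apply j).pow 2) 0 1)]
    rw [← integral_normsq hd]
    refine setIntegral_congr_fun measurableSet_closedBall (fun w _ => ?_) |>.symm
    rw [EuclideanSpace.norm_eq, Real.sq_sqrt (Finset.sum_nonneg fun j _ => sq_nonneg _)]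
    simp [sq_abs]
  have hconst : ∀ j : Fin d, ∫ w in closedBall (0 : EuclideanSpace ℝ (Fin d)) 1, (w j) ^ 2
      = ∫ w in closedBall (0 : EuclideanSpace ℝ (Fin d)) 1, (w i) ^ 2 :=
    fun j => moment_diag j i
  rw [Finset.sum_congr rfl (fun j _ => hconst j), Finset.sum_const, Finset.card_univ,
    Fintype.card_fin, nsmul_eq_mul] at hsum
  have hd0 : (0:ℝ) < d := by exact_mod_cast hd
  field_simp at hsum ⊢
  linarith [hsum]

lemma unit_moment (hd : 1 ≤ d) (v : EuclideanSpace ℝ (Fin d)) :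
    ∫ w in closedBall (0 : EuclideanSpace ℝ (Fin d)) 1, (⟪v, w⟫ : ℝ) • w
      = (sphereArea d / (d * (d + 2))) • v := by
  have hcont : Continuous fun w : EuclideanSpace ℝ (Fin d) => (⟪v, w⟫ : ℝ) • w :=
    by fun_prop
  have hInt : IntegrableOn (fun w : EuclideanSpace ℝ (Fin d) => (⟪v, w⟫ : ℝ) • w)
      (closedBall 0 1) volume :=
    hcont.continuousOn.integrableOn_compact (isCompact_closedBall _ _)
  refine PiLp.ext fun i => ?_
  have hproj := (EuclideanSpace.proj (𝕜 := ℝ) i).integral_comp_comm hInt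
  have hLHS : (∫ w in closedBall (0 : EuclideanSpace ℝ (Fin d)) 1, (⟪v, w⟫ : ℝ) • w) i
      = ∫ w in closedBall (0 : EuclideanSpace ℝ (Fin d)) 1, (⟪v, w⟫ : ℝ) * w i := by
    have h2 := hproj.symm
    simp only [EuclideanSpace.proj, PiLp.proj_apply, smul_eq_mul] at h2
    exact h2
  rw [hLHS]
  have hexp : ∀ w : EuclideanSpace ℝ (Fin d), (⟪v, w⟫ : ℝ) * w i
      = ∑ j : Fin d, v j * (w j * w i) := by
    intro w
    rw [PiLp.inner_apply]
    simp only [RCLike.inner_apply, conj_trivial]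
    rw [Finset.sum_mul]
    congr 1; funext j; ring
  simp only [hexp]
  rw [integral_finset_sum _ (fun j _ =>
    ((integrableOn_cb (g := fun w : EuclideanSpace ℝ (Fin d) => w j * w i)
      ((cont_apply j).mul (cont_apply i)) 0 1)).const_mul _)]
  have hterm : ∀ j : Fin d, (∫ w in closedBall (0 : EuclideanSpace ℝ (Fin d)) 1,
      v j * (w j * w i)) = v j * ∫ w in closedBall (0 : EuclideanSpace ℝ (Fin d)) 1, w j * w i :=
    fun j => integral_const_mul _ _
  simp only [hterm]
  rw [Finset.sum_eq_single i]
  · have : ∫ w in closedBall (0 : EuclideanSpace ℝ (Fin d)) 1, w i * w i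
        = sphereArea d / (d * (d + 2)) := by
      rw [← moment_diag_val hd i]
      congr 1; funext w; ring
    rw [this]
    rw [PiLp.smul_apply, smul_eq_mul, mul_comm]
  · intro j _ hji
    rw [moment_offdiag hji, mul_zero]
  · intro h; exact absurd (Finset.mem_univ i) h

end aux3

section aux4
variable {d : ℕ}

lemma scaled_moment (hd : 1 ≤ d) (v x : EuclideanSpace ℝ (Fin d)) {h : ℝ} (hh : 0 < h) :
    ∫ y in closedBall x h, (⟪v, y - x⟫ : ℝ) • (y - x)
      = (sphereArea d / (d * (d + 2)) * h ^ (d + 2)) • v := by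
  have htrans : ∫ y in closedBall x h, (⟪v, y - x⟫ : ℝ) • (y - x)
      = ∫ z in closedBall (0 : EuclideanSpace ℝ (Fin d)) h, (⟪v, z⟫ : ℝ) • z := by
    have hmp : MeasurePreserving (fun z : EuclideanSpace ℝ (Fin d) => z + x) volume volume :=
      measurePreserving_add_right volume x
    have hemb : MeasurableEmbedding (fun z : EuclideanSpace ℝ (Fin d) => z + x) :=
      (Homeomorph.addRight x).measurableEmbedding
    have key := hmp.setIntegral_preimage_emb hemb
      (fun y => (⟪v, y - x⟫ : ℝ) • (y - x)) (closedBall x h)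
    have hpre : (fun z : EuclideanSpace ℝ (Fin d) => z + x) ⁻¹' closedBall x h
        = closedBall 0 h := by
      ext z
      simp [mem_closedBall, dist_eq_norm]
    rw [hpre] at key
    simp only [add_sub_cancel_right] at key
    exact key.symm
  rw [htrans]
  have hset := Measure.setIntegral_comp_smul_of_pos (volume : Measure (EuclideanSpace ℝ (Fin d)))
    (fun z => (⟪v, z⟫ : ℝ) • z) (closedBall (0 : EuclideanSpace ℝ (Fin d)) 1) hh
  rw [_root_.smul_closedBall _ _ zero_le_one, smul_zero, Real.norm_eq_abs, abs_of_pos hh, mul_one] at hset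
  have hLHS : (∫ w in closedBall (0 : EuclideanSpace ℝ (Fin d)) 1,
        (⟪v, h • w⟫ : ℝ) • (h • w))
      = (h ^ 2) • ((sphereArea d / (d * (d + 2))) • v) := by
    rw [← unit_moment hd v, ← integral_smul]
    congr 1
    funext w
    rw [real_inner_smul_right, smul_smul, smul_smul]
    congr 1
    ring
  rw [hLHS, finrank_euclideanSpace_fin] at hset
  have hpd : (0:ℝ) < h ^ d := by positivity
  have := congrArg (fun z => (h ^ d) • z) hset
  simp only [smul_smul] at this
  rw [mul_inv_cancel₀ (ne_of_gt hpd), one_smul] at this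
  rw [← this]
  congr 1
  rw [pow_add]
  ring

end aux4


/-- As `h → 0⁺`,
`∫_{B_h(x)} (y − x)·(f(y) − f(x))·P(y) dy
  = (|S^{d-1}|/(d(d+2)))·h^{d+2}·P(x)·∇f(x) + O(h^{d+3})` as vectors in `ℝ^d`. -/
theorem local_mixed_moment_expansion_flat
    (d : ℕ) (hd : 1 ≤ d) (Ω : Set (EuclideanSpace ℝ (Fin d))) (hΩ : IsOpen Ω)
    (x : EuclideanSpace ℝ (Fin d)) (hx : x ∈ Ω)
    (f P : EuclideanSpace ℝ (Fin d) → ℝ)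
    (hf : ContDiffOn ℝ 2 f Ω) (hP : ContDiffOn ℝ 2 P Ω) :
    (fun h : ℝ =>
        (∫ y in closedBall x h, ((f y - f x) * P y) • (y - x))
          - (sphereArea d / (d * (d + 2)) * h ^ (d + 2) * P x) • gradient f x)
      =O[𝓝[>] (0 : ℝ)] fun h => h ^ (d + 3) := by
  classical
  set g : EuclideanSpace ℝ (Fin d) → ℝ := fun y => (f y - f x) * P y with hgdef
  have hgΩ : ContDiffOn ℝ 2 g Ω := (hf.sub contDiffOn_const).mul hP
  have hxmem : Ω ∈ 𝓝 x := hΩ.mem_nhds hx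
  have hgx : ContDiffAt ℝ 2 g x := hgΩ.contDiffAt hxmem
  have hfd : DifferentiableAt ℝ f x := ((hf.contDiffAt hxmem).differentiableAt two_ne_zero)
  have hPd : DifferentiableAt ℝ P x := ((hP.contDiffAt hxmem).differentiableAt two_ne_zero)
  set v : EuclideanSpace ℝ (Fin d) := P x • gradient f x with hvdef
  have hgderiv : HasFDerivAt g (P x • fderiv ℝ f x) x := by
    have h1 : HasFDerivAt (fun y => f y - f x) (fderiv ℝ f x) x := hfd.hasFDerivAt.sub_const _
    have h2 := h1.mul hPd.hasFDerivAt
    have h3 : HasFDerivAt g _ x := h2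
    simpa [sub_self] using h3
  have hdual : (InnerProductSpace.toDual ℝ (EuclideanSpace ℝ (Fin d))) (gradient f x)
      = fderiv ℝ f x := hfd.hasGradientAt.hasFDerivAt.unique hfd.hasFDerivAt
  have hφ : ∀ w, (P x • fderiv ℝ f x) w = (⟪v, w⟫ : ℝ) := by
    intro w
    have h3 : fderiv ℝ f x w = ⟪gradient f x, w⟫ := by
      rw [← hdual]; simp [InnerProductSpace.toDual_apply_apply]
    rw [hvdef, real_inner_smul_left, ← h3]
    rfl
  have hφeq : fderiv ℝ g x = P x • fderiv ℝ f x := hgderiv.fderiv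
  have h1 : ContDiffAt ℝ 1 (fderiv ℝ g) x := hgx.fderiv_right (by norm_num)
  obtain ⟨K, t, ht, hlip⟩ := h1.exists_lipschitzOnWith
  obtain ⟨r, hr0, hball⟩ := (Metric.nhds_basis_closedBall.mem_iff).1 (inter_mem ht hxmem)
  have hsubΩ : closedBall x r ⊆ Ω := hball.trans inter_subset_right
  have hsubt : closedBall x r ⊆ t := hball.trans inter_subset_left
  rw [isBigO_iff]
  refine ⟨(K : ℝ) * (volume (ball (0 : EuclideanSpace ℝ (Fin d)) 1)).toReal, ?_⟩
  filter_upwards [Ioc_mem_nhdsGT hr0] with h hh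
  obtain ⟨hh0, hhr⟩ := hh
  have hsub : closedBall x h ⊆ closedBall x r := closedBall_subset_closedBall hhr
  -- Taylor estimate
  have htaylor : ∀ y ∈ closedBall x h, |g y - (⟪v, y - x⟫ : ℝ)| ≤ (K : ℝ) * ‖y - x‖ ^ 2 := by
    intro y hy
    have hyx : ‖y - x‖ ≤ h := by rwa [← dist_eq_norm, ← mem_closedBall]
    have hs_sub : closedBall x ‖y - x‖ ⊆ closedBall x r :=
      closedBall_subset_closedBall (hyx.trans hhr)
    have hdiff : ∀ z ∈ closedBall x ‖y - x‖, DifferentiableAt ℝ g z := fun z hz =>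
      (hgΩ.contDiffAt (hΩ.mem_nhds (hsubΩ (hs_sub hz)))).differentiableAt two_ne_zero
    have hbound : ∀ z ∈ closedBall x ‖y - x‖,
        ‖fderiv ℝ g z - fderiv ℝ g x‖ ≤ (K : ℝ) * ‖y - x‖ := by
      intro z hz
      have hzx : dist z x ≤ ‖y - x‖ := mem_closedBall.1 hz
      have := hlip.dist_le_mul z (hsubt (hs_sub hz)) x (hsubt (mem_closedBall_self hr0.le))
      rw [dist_eq_norm] at this
      exact this.trans (by
        have : (K : ℝ) * dist z x ≤ (K : ℝ) * ‖y - x‖ :=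
          mul_le_mul_of_nonneg_left hzx K.coe_nonneg
        linarith)
    have key := Convex.norm_image_sub_le_of_norm_fderiv_le' hdiff hbound (convex_closedBall _ _)
      (mem_closedBall_self (norm_nonneg _))
      (show y ∈ closedBall x ‖y - x‖ by simp [mem_closedBall, dist_eq_norm])
    have hg0 : g x = 0 := by simp [hgdef]
    have hlin : fderiv ℝ g x (y - x) = (⟪v, y - x⟫ : ℝ) := by rw [hφeq]; exact hφ _
    rw [hg0, sub_zero, hlin] at key
    calc |g y - (⟪v, y - x⟫ : ℝ)| ≤ (K : ℝ) * ‖y - x‖ * ‖y - x‖ := key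
      _ = (K : ℝ) * ‖y - x‖ ^ 2 := by ring
  have hpt : ∀ y ∈ closedBall x h, ‖(g y - (⟪v, y - x⟫ : ℝ)) • (y - x)‖ ≤ (K : ℝ) * h ^ 3 := by
    intro y hy
    have hyx : ‖y - x‖ ≤ h := by rwa [← dist_eq_norm, ← mem_closedBall]
    have h2 := htaylor y hy
    rw [norm_smul, Real.norm_eq_abs]
    have hn : ‖y - x‖ ^ 2 ≤ h ^ 2 := by nlinarith [norm_nonneg (y - x)]
    have ha : |g y - (⟪v, y - x⟫ : ℝ)| ≤ (K : ℝ) * h ^ 2 :=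
      h2.trans (mul_le_mul_of_nonneg_left hn K.coe_nonneg)
    calc |g y - (⟪v, y - x⟫ : ℝ)| * ‖y - x‖ ≤ ((K : ℝ) * h ^ 2) * h :=
          mul_le_mul ha hyx (norm_nonneg _) (by positivity)
      _ = (K : ℝ) * h ^ 3 := by ring
  have hint1 : IntegrableOn (fun y => g y • (y - x)) (closedBall x h) volume := by
    apply ContinuousOn.integrableOn_compact (isCompact_closedBall _ _)
    exact ((hgΩ.continuousOn).mono (hsub.trans hsubΩ)).smul
      ((continuous_id.sub continuous_const).continuousOn)
  have hint2 : IntegrableOn (fun y => (⟪v, y - x⟫ : ℝ) • (y - x)) (closedBall x h) volume := by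
    apply ContinuousOn.integrableOn_compact (isCompact_closedBall _ _)
    exact (by fun_prop : Continuous fun y : EuclideanSpace ℝ (Fin d) =>
      (⟪v, y - x⟫ : ℝ) • (y - x)).continuousOn
  have hmom := scaled_moment hd v x hh0
  have hrw : (∫ y in closedBall x h, ((f y - f x) * P y) • (y - x))
        - (sphereArea d / (d * (d + 2)) * h ^ (d + 2) * P x) • gradient f x
      = ∫ y in closedBall x h, (g y - (⟪v, y - x⟫ : ℝ)) • (y - x) := by
    have hsm : (sphereArea d / (d * (d + 2)) * h ^ (d + 2) * P x) • gradient f x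
        = (sphereArea d / (d * (d + 2)) * h ^ (d + 2)) • v := by
      rw [hvdef, smul_smul]
    rw [hsm, ← hmom, ← integral_sub hint1 hint2]
    congr 1
    funext y
    rw [sub_smul]
  rw [hrw]
  have hnorm := MeasureTheory.norm_setIntegral_le_of_norm_le_const
    (show volume (closedBall x h) < ⊤ from measure_closedBall_lt_top) hpt
  have hvol : (volume (closedBall x h)).toReal
      = h ^ d * (volume (ball (0 : EuclideanSpace ℝ (Fin d)) 1)).toReal := by
    rw [Measure.addHaar_closedBall volume x hh0.le, ENNReal.toReal_mul,
      ENNReal.toReal_ofReal (by positivity), finrank_euclideanSpace_fin]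
  rw [measureReal_def, hvol] at hnorm
  have hhn : ‖h ^ (d + 3)‖ = h ^ (d + 3) := by
    rw [Real.norm_eq_abs, abs_of_pos (by positivity)]
  rw [hhn]
  calc ‖∫ y in closedBall x h, (g y - (⟪v, y - x⟫ : ℝ)) • (y - x)‖
      ≤ (K : ℝ) * h ^ 3 * (h ^ d * (volume (ball (0 : EuclideanSpace ℝ (Fin d)) 1)).toReal) :=
        hnorm
    _ = (K : ℝ) * (volume (ball (0 : EuclideanSpace ℝ (Fin d)) 1)).toReal * h ^ (d + 3) := by
        rw [pow_add]; ring
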